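/- arXiv:1906.04697 — 2 statements merged into one kernel-verified Lean document; each statement's English description precedes it below -/
import Mathlib

section
/- Fix a realization of the empirical Bellman operators T̂₁, T̂₂, … and of the recentering operator T̃_N, a recentering point θ̄ and B > 0 with ‖θ₁ − θ*‖_∞ ≤ B where θ₁ = θ̄. Define the iterates θ_{k+1} = (1−λ_k)·θ_k + λ_k·{T̂_k(θ_k) − T̂_k(θ̄) + T̃_N(θ̄)} with λ_k = 1/(1+(1−γ)k), the noise matrices V° = (T̃_N(θ̄) − T̃_N(θ*)) − (T(θ̄) − T(θ*)), V† = T̃_N(θ*) − T(θ*), V'_t = (T(θ̄) − T(θ*)) − (T̂_t(θ̄) − T̂_t(θ*)), and the process path'₁ = 0, path'_{t+1} = (1−λ_t)·path'_t + λ_t·V'_t. Then for every K ≥ 1: ‖θ_{K+1} − θ*‖_∞ ≤ 2B/(1+(1−γ)K) + 3·(‖V°‖_∞ + ‖V†‖_∞)/(1−γ) + (2·Σ_{ℓ=1}^{K} ‖path'_ℓ‖_∞)/(1+(1−γ)K) + ‖path'_{K+1}‖_∞. -/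
open MeasureTheory ProbabilityTheory Finset

namespace VRQ

variable {S A : Type} [Fintype S] [Fintype A] [Nonempty S] [Nonempty A]

/-- A finite Markov decision process: transition probabilities and rewards. -/
structure MDP (S A : Type) [Fintype S] [Fintype A] where
  P : S → A → S → ℝ
  P_nonneg : ∀ s a s', 0 ≤ P s a s'
  P_sum_one : ∀ s a, ∑ s', P s a s' = 1
  r : S → A → ℝ

/-- `vmax θ s = max_{a} θ s a`. -/
noncomputable def vmax (θ : S → A → ℝ) (s : S) : ℝ :=
  (Finset.univ : Finset A).sup' Finset.univ_nonempty (θ s)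

/-- Sup-norm over state-action pairs. -/
noncomputable def supNorm (θ : S → A → ℝ) : ℝ :=
  (Finset.univ : Finset (S × A)).sup' Finset.univ_nonempty fun p => |θ p.1 p.2|

/-- The population Bellman operator. -/
noncomputable def bellman (M : MDP S A) (γ : ℝ) (θ : S → A → ℝ) : S → A → ℝ :=
  fun s a => M.r s a + γ * ∑ s', M.P s a s' * vmax θ s'

/-- The empirical Bellman operator built from the sample `X`. -/
noncomputable def empBellman (M : MDP S A) (γ : ℝ) (X : S → A → S) (θ : S → A → ℝ) :
    S → A → ℝ :=
  fun s a => M.r s a + γ * vmax θ (X s a)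

/-- The entrywise standard deviation `σ(θ)(s,a)` of the empirical Bellman operator at `θ`. -/
noncomputable def bellStd (M : MDP S A) (γ : ℝ) (θ : S → A → ℝ) : S → A → ℝ :=
  fun s a => Real.sqrt (γ ^ 2 *
    (∑ s', M.P s a s' * (vmax θ s') ^ 2 - (∑ s', M.P s a s' * vmax θ s') ^ 2))

/-- Monte Carlo approximation `T̃_N` of the Bellman operator from `N` samples. -/
noncomputable def mcBellman (M : MDP S A) (γ : ℝ) (N : ℕ) (Y : ℕ → S → A → S)
    (θ : S → A → ℝ) : S → A → ℝ :=
  fun s a => (N : ℝ)⁻¹ * ∑ i ∈ Finset.range N, empBellman M γ (Y i) θ s a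

/-- Stepsize `λ_k = 1/(1+(1-γ)k)`. -/
noncomputable def stepSize (γ : ℝ) (k : ℕ) : ℝ := 1 / (1 + (1 - γ) * k)

/-- Variance-reduced `Q`-learning iterates within one epoch: `vrIter ... t = θ_{t+1}`,
with `θ₁ = θbar` and `θ_{t+1} = (1-λ_t) θ_t + λ_t (T̂_t(θ_t) - T̂_t(θbar) + rec)`. -/
noncomputable def vrIter (M : MDP S A) (γ : ℝ) (θbar rec : S → A → ℝ)
    (X : ℕ → S → A → S) : ℕ → S → A → ℝ
  | 0 => θbar
  | t + 1 => fun s a =>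
      (1 - stepSize γ (t + 1)) * vrIter M γ θbar rec X t s a +
        stepSize γ (t + 1) *
          (empBellman M γ (X (t + 1)) (vrIter M γ θbar rec X t) s a -
            empBellman M γ (X (t + 1)) θbar s a + rec s a)

/-- One epoch of variance-reduced `Q`-learning. -/
noncomputable def runEpoch (M : MDP S A) (γ : ℝ) (K N : ℕ)
    (X Y : ℕ → S → A → S) (θbar : S → A → ℝ) : S → A → ℝ :=
  vrIter M γ θbar (mcBellman M γ N Y θbar) X K

/-- The full variance-reduced `Q`-learning algorithm: `vrQLearn ... m = θ̄_m`. -/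
noncomputable def vrQLearn (M : MDP S A) (γ : ℝ) (K : ℕ) (Nm : ℕ → ℕ)
    (X Y : ℕ → ℕ → S → A → S) (θ0 : S → A → ℝ) : ℕ → S → A → ℝ
  | 0 => θ0
  | m + 1 => runEpoch M γ K (Nm (m + 1)) (X (m + 1)) (Y (m + 1))
      (vrQLearn M γ K Nm X Y θ0 m)

/-- Auxiliary noise process: `path₁ = 0`, `path_{t+1} = (1-λ_t) path_t + λ_t W_t`. -/
noncomputable def auxPath (γ : ℝ) (W : ℕ → S → A → ℝ) : ℕ → S → A → ℝ
  | 0 => fun _ _ => 0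
  | t + 1 =>
      if t = 0 then fun _ _ => 0
      else fun s a => (1 - stepSize γ t) * auxPath γ W t s a + stepSize γ t * W t s a

/-- `X : Ω → S → A → S` is a generative-model sample: each coordinate `X ω s a`
is distributed according to `P(· | s,a)`. -/
def IsSample {Ω : Type} [MeasurableSpace Ω] [MeasurableSpace S] (μ : Measure Ω)
    (M : MDP S A) (X : Ω → S → A → S) : Prop :=
  (∀ s a, Measurable fun ω => X ω s a) ∧
    ∀ s a s', μ {ω | X ω s a = s'} = ENNReal.ofReal (M.P s a s')

/-- Policy transition operator `P^π`. -/
noncomputable def polOp (M : MDP S A) (π : S → A) (u : S → A → ℝ) : S → A → ℝ :=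
  fun s a => ∑ s', M.P s a s' * u s' (π s')

/-- The resolvent `(I - γ P^π)⁻¹ = Σ_{k≥0} γ^k (P^π)^k`. -/
noncomputable def resolvent (M : MDP S A) (γ : ℝ) (π : S → A) (u : S → A → ℝ) :
    S → A → ℝ :=
  fun s a => ∑' k : ℕ, γ ^ k * (polOp M π)^[k] u s a


lemma abs_le_supNorm' (θ : S → A → ℝ) (s : S) (a : A) : |θ s a| ≤ supNorm θ :=
  Finset.le_sup' (fun p : S × A => |θ p.1 p.2|) (Finset.mem_univ (s, a))

lemma supNorm_le' (θ : S → A → ℝ) {c : ℝ} (h : ∀ s a, |θ s a| ≤ c) : supNorm θ ≤ c :=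
  Finset.sup'_le _ _ fun p _ => h p.1 p.2

lemma supNorm_nonneg' (θ : S → A → ℝ) : 0 ≤ supNorm θ := by
  obtain ⟨s⟩ := (inferInstance : Nonempty S)
  obtain ⟨a⟩ := (inferInstance : Nonempty A)
  exact le_trans (abs_nonneg _) (abs_le_supNorm' θ s a)

lemma vmax_sub_le_supNorm (θ₁ θ₂ : S → A → ℝ) (s : S) :
    vmax θ₁ s - vmax θ₂ s ≤ supNorm (fun s a => θ₁ s a - θ₂ s a) := by
  obtain ⟨a, -, ha⟩ := Finset.exists_mem_eq_sup' (Finset.univ_nonempty) (θ₁ s)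
  have h2 : θ₂ s a ≤ vmax θ₂ s := Finset.le_sup' _ (Finset.mem_univ a)
  have h3 : θ₁ s a - θ₂ s a ≤ supNorm (fun s a => θ₁ s a - θ₂ s a) :=
    le_trans (le_abs_self _) (abs_le_supNorm' (fun s a => θ₁ s a - θ₂ s a) s a)
  have h1 : vmax θ₁ s = θ₁ s a := ha
  linarith

lemma abs_vmax_sub (θ₁ θ₂ : S → A → ℝ) (s : S) :
    |vmax θ₁ s - vmax θ₂ s| ≤ supNorm (fun s a => θ₁ s a - θ₂ s a) := by
  rw [abs_sub_le_iff]
  refine ⟨vmax_sub_le_supNorm θ₁ θ₂ s, le_trans (vmax_sub_le_supNorm θ₂ θ₁ s) ?_⟩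
  apply supNorm_le'
  intro s a
  rw [abs_sub_comm]
  exact abs_le_supNorm' (fun s a => θ₁ s a - θ₂ s a) s a

lemma auxPath_one (γ : ℝ) (W : ℕ → S → A → ℝ) : auxPath γ W 1 = fun _ _ => 0 := by
  simp [auxPath]

lemma auxPath_succ (γ : ℝ) (W : ℕ → S → A → ℝ) (t : ℕ) (ht : t ≠ 0) :
    auxPath γ W (t + 1) =
      fun s a => (1 - stepSize γ t) * auxPath γ W t s a + stepSize γ t * W t s a := by
  simp [auxPath, ht]

/-- Deterministic decomposition bound on one epoch in terms of the noise matrices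
`V°`, `V†` and the auxiliary process `{path'_t}`. -/
theorem stmt13 :
    ∀ (S A : Type) [Fintype S] [Fintype A] [Nonempty S] [Nonempty A]
      (M : MDP S A) (γ : ℝ), 0 < γ → γ < 1 →
      ∀ θstar : S → A → ℝ, bellman M γ θstar = θstar →
      ∀ (X : ℕ → S → A → S) (N : ℕ) (Y : ℕ → S → A → S) (θbar : S → A → ℝ) (B : ℝ),
        supNorm (fun s a => θbar s a - θstar s a) ≤ B →
      ∀ Vp : ℕ → S → A → ℝ,
        (∀ t s a, Vp t s a =
          (bellman M γ θbar s a - bellman M γ θstar s a) -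
            (empBellman M γ (X t) θbar s a - empBellman M γ (X t) θstar s a)) →
      ∀ K : ℕ, 1 ≤ K →
        supNorm (fun s a =>
            vrIter M γ θbar (mcBellman M γ N Y θbar) X K s a - θstar s a) ≤
          2 * B / (1 + (1 - γ) * K) +
            3 * (supNorm (fun s a =>
                  (mcBellman M γ N Y θbar s a - mcBellman M γ N Y θstar s a) -
                    (bellman M γ θbar s a - bellman M γ θstar s a)) +
                supNorm (fun s a =>
                  mcBellman M γ N Y θstar s a - bellman M γ θstar s a)) / (1 - γ) +
            2 * (∑ ℓ ∈ Finset.Icc 1 K, supNorm (auxPath γ Vp ℓ)) /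
              (1 + (1 - γ) * K) +
            supNorm (auxPath γ Vp (K + 1)) := by
  intro S A _ _ _ _ M γ hγ0 hγ1 θstar hfix X N Y θbar B hB Vp hVp K hK
  have hγ : (0:ℝ) < 1 - γ := by linarith
  set rec := mcBellman M γ N Y θbar with hrec
  set v1 := supNorm (fun s a =>
      rec s a - mcBellman M γ N Y θstar s a -
        (bellman M γ θbar s a - bellman M γ θstar s a)) with hv1
  set v2 := supNorm (fun s a =>
      mcBellman M γ N Y θstar s a - bellman M γ θstar s a) with hv2
  -- noise bound for the recentering term
  have hW : ∀ s a, |rec s a - bellman M γ θbar s a| ≤ v1 + v2 := by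
    intro s a
    have h1 : |rec s a - mcBellman M γ N Y θstar s a -
        (bellman M γ θbar s a - bellman M γ θstar s a)| ≤ v1 := by
      rw [hv1]
      exact abs_le_supNorm' (fun s a => rec s a - mcBellman M γ N Y θstar s a -
        (bellman M γ θbar s a - bellman M γ θstar s a)) s a
    have h2 : |mcBellman M γ N Y θstar s a - bellman M γ θstar s a| ≤ v2 := by
      rw [hv2]
      exact abs_le_supNorm' (fun s a =>
        mcBellman M γ N Y θstar s a - bellman M γ θstar s a) s a
    have hsplit : rec s a - bellman M γ θbar s a =
        (rec s a - mcBellman M γ N Y θstar s a -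
          (bellman M γ θbar s a - bellman M γ θstar s a)) +
        (mcBellman M γ N Y θstar s a - bellman M γ θstar s a) := by ring
    rw [hsplit]
    exact le_trans (abs_add_le _ _) (add_le_add h1 h2)
  set E : ℕ → S → A → ℝ := fun t s a =>
    vrIter M γ θbar rec X t s a - θstar s a - auxPath γ Vp (t + 1) s a with hE
  have hcpos : ∀ t : ℕ, (0:ℝ) < 1 + (1 - γ) * t := by
    intro t
    have : (0:ℝ) ≤ (t:ℝ) := Nat.cast_nonneg t
    nlinarith
  -- one-step recursion bound
  have step : ∀ t : ℕ,
      (1 + (1 - γ) * ((t:ℝ) + 1)) * supNorm (E (t + 1)) ≤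
        (1 + (1 - γ) * (t:ℝ)) * supNorm (E t) +
          γ * supNorm (auxPath γ Vp (t + 1)) + (v1 + v2) := by
    intro t
    set lam := stepSize γ (t + 1) with hlam
    have hc1 : (0:ℝ) < 1 + (1 - γ) * ((t:ℝ) + 1) := by
      have := hcpos (t + 1); push_cast at this; linarith
    have hlam' : lam = 1 / (1 + (1 - γ) * ((t:ℝ) + 1)) := by
      rw [hlam]; simp only [stepSize]; push_cast; ring_nf
    have hlampos : 0 < lam := by rw [hlam']; positivity
    have hlamle : lam ≤ 1 := by
      rw [hlam', div_le_one hc1]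
      have : (0:ℝ) ≤ (t:ℝ) := Nat.cast_nonneg t
      nlinarith
    have h1lam : (0:ℝ) ≤ 1 - lam := by linarith
    set D := supNorm (fun s a => vrIter M γ θbar rec X t s a - θstar s a) with hD
    have hDle : D ≤ supNorm (E t) + supNorm (auxPath γ Vp (t + 1)) := by
      rw [hD]
      apply supNorm_le'
      intro s a
      have h1 : |E t s a| ≤ supNorm (E t) := abs_le_supNorm' (E t) s a
      have h2 : |auxPath γ Vp (t + 1) s a| ≤ supNorm (auxPath γ Vp (t + 1)) :=
        abs_le_supNorm' (auxPath γ Vp (t + 1)) s a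
      have hsp : vrIter M γ θbar rec X t s a - θstar s a =
          E t s a + auxPath γ Vp (t + 1) s a := by simp only [hE]; ring
      rw [hsp]
      exact le_trans (abs_add_le _ _) (add_le_add h1 h2)
    have hpt : ∀ s a, |E (t + 1) s a| ≤
        (1 - lam) * supNorm (E t) + lam * (γ * D) + lam * (v1 + v2) := by
      intro s a
      have hθ : bellman M γ θstar s a = θstar s a := by rw [hfix]
      have hid : E (t + 1) s a = (1 - lam) * E t s a +
          lam * (γ * (vmax (vrIter M γ θbar rec X t) (X (t + 1) s a) -
            vmax θstar (X (t + 1) s a))) +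
          lam * (rec s a - bellman M γ θbar s a) := by
        rw [hE]
        simp only [vrIter, auxPath_succ γ Vp (t + 1) (Nat.succ_ne_zero t),
          hVp (t + 1) s a, empBellman, ← hlam]
        rw [← hθ]
        ring
      rw [hid]
      have b1 : |E t s a| ≤ supNorm (E t) := abs_le_supNorm' (E t) s a
      have b2 : |vmax (vrIter M γ θbar rec X t) (X (t + 1) s a) -
          vmax θstar (X (t + 1) s a)| ≤ D := by
        rw [hD]
        exact abs_vmax_sub (vrIter M γ θbar rec X t) θstar (X (t + 1) s a)
      have b3 := hW s a
      calc |(1 - lam) * E t s a +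
          lam * (γ * (vmax (vrIter M γ θbar rec X t) (X (t + 1) s a) -
            vmax θstar (X (t + 1) s a))) +
          lam * (rec s a - bellman M γ θbar s a)|
          ≤ |(1 - lam) * E t s a| +
            |lam * (γ * (vmax (vrIter M γ θbar rec X t) (X (t + 1) s a) -
              vmax θstar (X (t + 1) s a)))| +
            |lam * (rec s a - bellman M γ θbar s a)| := abs_add_three _ _ _
        _ = (1 - lam) * |E t s a| +
            lam * (γ * |vmax (vrIter M γ θbar rec X t) (X (t + 1) s a) -
              vmax θstar (X (t + 1) s a)|) +
            lam * |rec s a - bellman M γ θbar s a| := by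
            rw [abs_mul, abs_mul, abs_mul, abs_mul, abs_of_nonneg h1lam,
              abs_of_nonneg hlampos.le, abs_of_nonneg hγ0.le]
        _ ≤ (1 - lam) * supNorm (E t) + lam * (γ * D) + lam * (v1 + v2) := by
            have c1 := mul_le_mul_of_nonneg_left b1 h1lam
            have c2 := mul_le_mul_of_nonneg_left
              (mul_le_mul_of_nonneg_left b2 hγ0.le) hlampos.le
            have c3 := mul_le_mul_of_nonneg_left b3 hlampos.le
            linarith
    have hsup : supNorm (E (t + 1)) ≤
        (1 - lam) * supNorm (E t) + lam * (γ * D) + lam * (v1 + v2) :=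
      supNorm_le' _ hpt
    have hmul := mul_le_mul_of_nonneg_left hsup hc1.le
    have key : (1 + (1 - γ) * ((t:ℝ) + 1)) *
        ((1 - lam) * supNorm (E t) + lam * (γ * D) + lam * (v1 + v2)) =
        (1 + (1 - γ) * (t:ℝ)) * supNorm (E t) +
          γ * (D - supNorm (E t)) + (v1 + v2) := by
      rw [hlam']
      field_simp
      ring
    rw [key] at hmul
    have hfinal : γ * (D - supNorm (E t)) ≤ γ * supNorm (auxPath γ Vp (t + 1)) :=
      mul_le_mul_of_nonneg_left (by linarith) hγ0.le
    linarith
  -- telescoped bound by induction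
  have main : ∀ t : ℕ, (1 + (1 - γ) * (t:ℝ)) * supNorm (E t) ≤
      B + γ * (∑ ℓ ∈ Finset.Icc 1 t, supNorm (auxPath γ Vp ℓ)) +
        (t:ℝ) * (v1 + v2) := by
    intro t
    induction t with
    | zero =>
        have hE0 : E 0 = fun s a => θbar s a - θstar s a := by
          funext s a
          rw [hE]
          simp [vrIter, auxPath_one]
        rw [hE0]
        have : Finset.Icc 1 0 = (∅ : Finset ℕ) :=
          Finset.Icc_eq_empty (by norm_num)
        rw [this]
        simp only [Nat.cast_zero, mul_zero, add_zero, Finset.sum_empty, zero_mul,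
          one_mul]
        exact hB
    | succ t ih =>
        have hsum : ∑ ℓ ∈ Finset.Icc 1 (t + 1), supNorm (auxPath γ Vp ℓ) =
            (∑ ℓ ∈ Finset.Icc 1 t, supNorm (auxPath γ Vp ℓ)) +
              supNorm (auxPath γ Vp (t + 1)) :=
          Finset.sum_Icc_succ_top (by omega) _
        have hst := step t
        push_cast
        rw [hsum]
        push_cast at hst ih
        linarith
  -- conclusion
  have hSnn : (0:ℝ) ≤ ∑ ℓ ∈ Finset.Icc 1 K, supNorm (auxPath γ Vp ℓ) :=
    Finset.sum_nonneg fun ℓ _ => supNorm_nonneg' _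
  have hBnn : (0:ℝ) ≤ B := le_trans (supNorm_nonneg' _) hB
  have hvnn : (0:ℝ) ≤ v1 + v2 := by
    have := supNorm_nonneg' (fun s a =>
      rec s a - mcBellman M γ N Y θstar s a -
        (bellman M γ θbar s a - bellman M γ θstar s a))
    have := supNorm_nonneg' (fun s a =>
      mcBellman M γ N Y θstar s a - bellman M γ θstar s a)
    rw [hv1, hv2]
    linarith
  have hcK : (0:ℝ) < 1 + (1 - γ) * (K:ℝ) := hcpos K
  have hEK : supNorm (E K) ≤
      (B + γ * (∑ ℓ ∈ Finset.Icc 1 K, supNorm (auxPath γ Vp ℓ)) +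
        (K:ℝ) * (v1 + v2)) / (1 + (1 - γ) * (K:ℝ)) := by
    rw [le_div_iff₀ hcK, mul_comm]
    exact main K
  have hdecomp : supNorm (fun s a => vrIter M γ θbar rec X K s a - θstar s a) ≤
      supNorm (E K) + supNorm (auxPath γ Vp (K + 1)) := by
    apply supNorm_le'
    intro s a
    have h1 : |E K s a| ≤ supNorm (E K) := abs_le_supNorm' (E K) s a
    have h2 : |auxPath γ Vp (K + 1) s a| ≤ supNorm (auxPath γ Vp (K + 1)) :=
      abs_le_supNorm' (auxPath γ Vp (K + 1)) s a
    have hsp : vrIter M γ θbar rec X K s a - θstar s a =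
        E K s a + auxPath γ Vp (K + 1) s a := by simp only [hE]; ring
    rw [hsp]
    exact le_trans (abs_add_le _ _) (add_le_add h1 h2)
  set Ssum := ∑ ℓ ∈ Finset.Icc 1 K, supNorm (auxPath γ Vp ℓ) with hSsum
  have hsplitdiv : (B + γ * Ssum + (K:ℝ) * (v1 + v2)) / (1 + (1 - γ) * (K:ℝ)) =
      B / (1 + (1 - γ) * (K:ℝ)) + γ * Ssum / (1 + (1 - γ) * (K:ℝ)) +
        (K:ℝ) * (v1 + v2) / (1 + (1 - γ) * (K:ℝ)) := by
    ring
  have t1 : B / (1 + (1 - γ) * (K:ℝ)) ≤ 2 * B / (1 + (1 - γ) * (K:ℝ)) := by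
    rw [div_le_div_iff₀ hcK hcK]
    nlinarith [mul_nonneg hBnn hcK.le]
  have t2 : γ * Ssum / (1 + (1 - γ) * (K:ℝ)) ≤ 2 * Ssum / (1 + (1 - γ) * (K:ℝ)) := by
    rw [div_le_div_iff₀ hcK hcK]
    nlinarith [mul_nonneg hSnn hcK.le, mul_nonneg (mul_nonneg hγ.le hSnn) hcK.le]
  have t3 : (K:ℝ) * (v1 + v2) / (1 + (1 - γ) * (K:ℝ)) ≤
      3 * (v1 + v2) / (1 - γ) := by
    rw [div_le_div_iff₀ hcK hγ]
    have hKnn : (0:ℝ) ≤ (K:ℝ) := Nat.cast_nonneg K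
    nlinarith [mul_nonneg (mul_nonneg hvnn hγ.le) hKnn, hvnn]
  calc supNorm (fun s a => vrIter M γ θbar rec X K s a - θstar s a)
      ≤ supNorm (E K) + supNorm (auxPath γ Vp (K + 1)) := hdecomp
    _ ≤ (B + γ * Ssum + (K:ℝ) * (v1 + v2)) / (1 + (1 - γ) * (K:ℝ)) +
        supNorm (auxPath γ Vp (K + 1)) := by linarith
    _ ≤ 2 * B / (1 + (1 - γ) * (K:ℝ)) + 3 * (v1 + v2) / (1 - γ) +
        2 * Ssum / (1 + (1 - γ) * (K:ℝ)) +
        supNorm (auxPath γ Vp (K + 1)) := by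
        rw [hsplitdiv]
        linarith

end VRQ
end

section
/- Let θ* be the optimal Q-function for the reward r, let θ̂ be the optimal Q-function for a perturbed reward r̃ : S×A → ℝ, and let π̂ be a greedy policy for θ̂, i.e. π̂(s) ∈ argmax_a θ̂(s,a). Then the elementwise positive part satisfies max{θ̂(s,a) − θ*(s,a), 0} ≤ ((I − γP^{π̂})^{−1}|r̃ − r|)(s,a) for every state-action pair (s,a), where |r̃ − r| denotes the function (s,a) ↦ |r̃(s,a) − r(s,a)|. -/
open MeasureTheory ProbabilityTheory Finset

namespace VRQ

variable {S A : Type} [Fintype S] [Fintype A] [Nonempty S] [Nonempty A]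

section Helpers

variable (M : MDP S A) (π : S → A)

lemma polOp_abs_bound {u : S → A → ℝ} {C : ℝ}
    (h : ∀ s a, |u s a| ≤ C) : ∀ s a, |polOp M π u s a| ≤ C := by
  intro s a
  calc |polOp M π u s a| ≤ ∑ s', |M.P s a s' * u s' (π s')| :=
        Finset.abs_sum_le_sum_abs _ _
    _ ≤ ∑ s', M.P s a s' * C := by
        apply Finset.sum_le_sum; intro s' _
        rw [abs_mul, abs_of_nonneg (M.P_nonneg s a s')]
        exact mul_le_mul_of_nonneg_left (h _ _) (M.P_nonneg s a s')
    _ = C := by rw [← Finset.sum_mul, M.P_sum_one, one_mul]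

lemma iter_abs_bound {u : S → A → ℝ} {C : ℝ}
    (h : ∀ s a, |u s a| ≤ C) : ∀ (k : ℕ) (s : S) (a : A),
      |(polOp M π)^[k] u s a| ≤ C := by
  intro k; induction k with
  | zero => exact h
  | succ n ih => rw [Function.iterate_succ_apply']; exact polOp_abs_bound M π ih

lemma polOp_mono {u v : S → A → ℝ} (h : ∀ s a, u s a ≤ v s a) :
    ∀ s a, polOp M π u s a ≤ polOp M π v s a := by
  intro s a
  apply Finset.sum_le_sum; intro s' _
  exact mul_le_mul_of_nonneg_left (h _ _) (M.P_nonneg s a s')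

lemma polOp_nonneg {u : S → A → ℝ} (h : ∀ s a, 0 ≤ u s a) :
    ∀ s a, 0 ≤ polOp M π u s a := by
  intro s a
  apply Finset.sum_nonneg; intro s' _
  exact mul_nonneg (M.P_nonneg s a s') (h _ _)

lemma iter_nonneg {u : S → A → ℝ} (h : ∀ s a, 0 ≤ u s a) :
    ∀ (k : ℕ) (s : S) (a : A), 0 ≤ (polOp M π)^[k] u s a := by
  intro k; induction k with
  | zero => exact h
  | succ n ih => rw [Function.iterate_succ_apply']; exact polOp_nonneg M π ih

lemma summable_res {γ : ℝ} (hγ0 : 0 ≤ γ) (hγ1 : γ < 1) (u : S → A → ℝ)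
    (s : S) (a : A) :
    Summable (fun k : ℕ => γ ^ k * (polOp M π)^[k] u s a) := by
  have hb : ∀ s a, |u s a| ≤ supNorm u := fun s a =>
    Finset.le_sup' (fun p : S × A => |u p.1 p.2|) (Finset.mem_univ (s, a))
  apply Summable.of_norm
  apply Summable.of_nonneg_of_le (fun k => norm_nonneg _) (fun k => ?_)
    ((summable_geometric_of_lt_one hγ0 hγ1).mul_right (supNorm u))
  rw [Real.norm_eq_abs, abs_mul, abs_of_nonneg (pow_nonneg hγ0 k)]
  exact mul_le_mul_of_nonneg_left (iter_abs_bound M π hb k s a) (pow_nonneg hγ0 k)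

lemma resolvent_nonneg {γ : ℝ} (hγ0 : 0 ≤ γ) {u : S → A → ℝ}
    (h : ∀ s a, 0 ≤ u s a) : ∀ s a, 0 ≤ resolvent M γ π u s a := by
  intro s a
  apply tsum_nonneg
  intro k
  exact mul_nonneg (pow_nonneg hγ0 k) (iter_nonneg M π h k s a)

lemma resolvent_eq {γ : ℝ} (hγ0 : 0 ≤ γ) (hγ1 : γ < 1) (u : S → A → ℝ)
    (s : S) (a : A) :
    resolvent M γ π u s a = u s a + γ * polOp M π (resolvent M γ π u) s a := by
  have hsum := summable_res M π hγ0 hγ1 u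
  rw [resolvent, Summable.tsum_eq_zero_add (hsum s a)]
  simp only [pow_zero, one_mul, Function.iterate_zero, id_eq]
  congr 1
  have h1 : ∀ k : ℕ, γ ^ (k + 1) * (polOp M π)^[k + 1] u s a
      = ∑ s', γ * (M.P s a s' * (γ ^ k * (polOp M π)^[k] u s' (π s'))) := by
    intro k
    rw [Function.iterate_succ_apply']
    show γ ^ (k + 1) * ∑ s', M.P s a s' * (polOp M π)^[k] u s' (π s') = _
    rw [Finset.mul_sum]
    apply Finset.sum_congr rfl; intro s' _; ring
  simp only [h1]
  rw [Summable.tsum_finsetSum (fun s' _ => ((hsum s' (π s')).mul_left _).mul_left _)]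
  simp only [tsum_mul_left]
  show _ = γ * ∑ s', M.P s a s' * resolvent M γ π u s' (π s')
  rw [Finset.mul_sum]
  apply Finset.sum_congr rfl; intro s' _
  rfl

end Helpers

/-- Elementwise bound on the positive part `(θ̂ - θ*)₊` under a reward perturbation. -/
theorem stmt19 :
    ∀ (S A : Type) [Fintype S] [Fintype A] [Nonempty S] [Nonempty A]
      (M : MDP S A) (γ : ℝ), 0 < γ → γ < 1 →
      ∀ θstar : S → A → ℝ, bellman M γ θstar = θstar →
      ∀ (rt : S → A → ℝ) (θhat : S → A → ℝ),
        bellman { M with r := rt } γ θhat = θhat →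
      ∀ πhat : S → A, (∀ s, θhat s (πhat s) = vmax θhat s) →
      ∀ s a, max (θhat s a - θstar s a) 0 ≤
        resolvent M γ πhat (fun s' a' => |rt s' a' - M.r s' a'|) s a := by
  intro S A _ _ _ _ M γ hγ0 hγ1 θstar hstar rt θhat hhat πhat hπ s a
  set e : S → A → ℝ := fun s' a' => |rt s' a' - M.r s' a'| with he
  set u : S → A → ℝ := fun s' a' => θhat s' a' - θstar s' a' with hu
  have he_nonneg : ∀ s' a', 0 ≤ e s' a' := fun s' a' => abs_nonneg _
  -- Step C : u ≤ e + γ P^π u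
  have hC : ∀ s' a', u s' a' ≤ e s' a' + γ * polOp M πhat u s' a' := by
    intro s' a'
    have h1 : θhat s' a' = rt s' a' + γ * ∑ x, M.P s' a' x * vmax θhat x :=
      (congrFun (congrFun hhat s') a').symm
    have h2 : θstar s' a' = M.r s' a' + γ * ∑ x, M.P s' a' x * vmax θstar x :=
      (congrFun (congrFun hstar s') a').symm
    have h3 : ∀ x, vmax θhat x - vmax θstar x ≤ u x (πhat x) := by
      intro x
      have ha : θstar x (πhat x) ≤ vmax θstar x :=
        Finset.le_sup' (θstar x) (Finset.mem_univ (πhat x))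
      have hb := hπ x
      simp only [hu]; linarith
    have h4 : ∑ x, M.P s' a' x * vmax θhat x - ∑ x, M.P s' a' x * vmax θstar x
        ≤ polOp M πhat u s' a' := by
      rw [← Finset.sum_sub_distrib]
      apply Finset.sum_le_sum; intro x _
      rw [← mul_sub]
      exact mul_le_mul_of_nonneg_left (h3 x) (M.P_nonneg s' a' x)
    have h5 : rt s' a' - M.r s' a' ≤ e s' a' := le_abs_self _
    have h6 : γ * (∑ x, M.P s' a' x * vmax θhat x - ∑ x, M.P s' a' x * vmax θstar x)
        ≤ γ * polOp M πhat u s' a' := mul_le_mul_of_nonneg_left h4 hγ0.le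
    simp only [hu]
    rw [h1, h2]
    nlinarith [h6]
  -- Step D : v := resolvent e - u satisfies v ≥ γ P^π v
  set v : S → A → ℝ := fun s' a' => resolvent M γ πhat e s' a' - u s' a' with hv
  have hD : ∀ s' a', γ * polOp M πhat v s' a' ≤ v s' a' := by
    intro s' a'
    have hres := resolvent_eq M πhat hγ0.le hγ1 e s' a'
    have hlin : polOp M πhat v s' a'
        = polOp M πhat (resolvent M γ πhat e) s' a' - polOp M πhat u s' a' := by
      simp only [polOp, hv, mul_sub, Finset.sum_sub_distrib]
    have := hC s' a'
    simp only [hv]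
    rw [hlin]
    nlinarith [this, hres]
  -- Step E : min argument shows v ≥ 0
  have hE : ∀ s' a', 0 ≤ v s' a' := by
    by_contra hcon
    push_neg at hcon
    obtain ⟨s0, a0, hneg⟩ := hcon
    obtain ⟨p, _, hpmin⟩ := Finset.exists_min_image (Finset.univ : Finset (S × A))
      (fun q => v q.1 q.2) ⟨(s0, a0), Finset.mem_univ _⟩
    set m := v p.1 p.2 with hm
    have hmle : ∀ s' a', m ≤ v s' a' := fun s' a' =>
      hpmin (s', a') (Finset.mem_univ _)
    have hmneg : m < 0 := lt_of_le_of_lt (hmle s0 a0) hneg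
    have hPv : γ * m ≤ γ * polOp M πhat v p.1 p.2 := by
      apply mul_le_mul_of_nonneg_left _ hγ0.le
      calc m = ∑ x, M.P p.1 p.2 x * m := by
              rw [← Finset.sum_mul, M.P_sum_one, one_mul]
        _ ≤ polOp M πhat v p.1 p.2 := by
              apply Finset.sum_le_sum; intro x _
              exact mul_le_mul_of_nonneg_left (hmle x (πhat x)) (M.P_nonneg p.1 p.2 x)
    have : γ * m ≤ m := le_trans hPv (hD p.1 p.2)
    nlinarith
  have h1 : θhat s a - θstar s a ≤ resolvent M γ πhat e s a := by
    have := hE s a; simp only [hv, hu] at this; linarith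
  have h2 : (0 : ℝ) ≤ resolvent M γ πhat e s a :=
    resolvent_nonneg M πhat hγ0.le he_nonneg s a
  exact max_le h1 h2

end VRQ
end
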